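/- Let q be a power of a prime p > 2, let n ≥ 2, and set m = 1 + q + q^2 + ... + q^{n-1}. Let C be the plane curve over F_{q^n} defined by x^m + y^m + z^m = 0. Then there exists an F_{q^n}-line L that intersects C transversely, i.e., L ∩ C consists of m distinct points over the algebraic closure of F_{q^n}. -/

import Mathlib

open MvPolynomial

noncomputable section

/-- The projective plane over a field `K`, as the projectivization of `K^3`. -/
abbrev ProjPlane (K : Type*) [Field K] := Projectivization K (Fin 3 → K)

variable {F : Type*} [Field F]

/-- A geometric point (over the algebraic closure) lies on the plane curve defined by `f`. -/
def OnCurve (f : MvPolynomial (Fin 3) F) (P : ProjPlane (AlgebraicClosure F)) : Prop :=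
  aeval P.rep f = 0

/-- A geometric point lies on the `F`-rational line with coefficient vector `a`. -/
def OnLine (a : Fin 3 → F) (P : ProjPlane (AlgebraicClosure F)) : Prop :=
  ∑ i, algebraMap F (AlgebraicClosure F) (a i) * P.rep i = 0

/-- The plane curve defined by `f` is smooth: the gradient of `f` is nonzero at every
geometric point of the curve. -/
def SmoothCurve (f : MvPolynomial (Fin 3) F) : Prop :=
  ∀ P : ProjPlane (AlgebraicClosure F), OnCurve f P → ∃ i, aeval P.rep (pderiv i f) ≠ 0

/-- The `F`-line with coefficients `a` meets the curve defined by `f` transversely: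
the intersection consists of exactly `d` distinct geometric points. -/
def Transverse (f : MvPolynomial (Fin 3) F) (a : Fin 3 → F) (d : ℕ) : Prop :=
  {P : ProjPlane (AlgebraicClosure F) | OnCurve f P ∧ OnLine a P}.ncard = d

/-- The restriction of `f` to the line `t ↦ v + t • w`, as a univariate polynomial. -/
def LinePoly (f : MvPolynomial (Fin 3) F) (v w : Fin 3 → AlgebraicClosure F) :
    Polynomial (AlgebraicClosure F) :=
  aeval (fun i => Polynomial.C (v i) + Polynomial.X * Polynomial.C (w i)) f

/-- `P` is a flex point of the curve defined by `f`: the tangent line at `P` meets the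
curve at `P` with intersection multiplicity at least 3. The tangent line is parametrized
through `P.rep` and a direction `w` lying on the tangent line, independent from `P.rep`. -/
def IsFlex (f : MvPolynomial (Fin 3) F) (P : ProjPlane (AlgebraicClosure F)) : Prop :=
  OnCurve f P ∧ ∃ w : Fin 3 → AlgebraicClosure F,
    (¬ ∃ c : AlgebraicClosure F, w = c • P.rep) ∧
    (∑ i, aeval P.rep (pderiv i f) * w i = 0) ∧
    (Polynomial.X : Polynomial (AlgebraicClosure F)) ^ 3 ∣ LinePoly f P.rep w

/-- The `F`-line with coefficients `a` is the tangent line to the curve `f` at the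
geometric point `P`, i.e. `a` is proportional to the gradient of `f` at `P`. -/
def IsTangentAt (f : MvPolynomial (Fin 3) F) (a : Fin 3 → F)
    (P : ProjPlane (AlgebraicClosure F)) : Prop :=
  OnCurve f P ∧ ∃ c : AlgebraicClosure F, c ≠ 0 ∧
    ∀ i, algebraMap F (AlgebraicClosure F) (a i) = c * aeval P.rep (pderiv i f)

/-- The `q`-power Frobenius map on the projective plane. -/
def FrobPt {K : Type*} [Field K] (q : ℕ) (P : ProjPlane K) : ProjPlane K :=
  Projectivization.mk K (fun i => P.rep i ^ q) (by
    intro hc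
    rcases Nat.eq_zero_or_pos q with h0 | h0
    · have := congrFun hc 0
      simp [h0] at this
    · apply P.rep_nonzero
      funext i
      have := congrFun hc i
      simp only [Pi.zero_apply] at this ⊢
      exact pow_eq_zero_iff h0.ne' |>.mp this)

/-- A geometric point of the projective plane is `F`-rational. -/
def IsRationalPt (P : ProjPlane (AlgebraicClosure F)) : Prop :=
  ∃ v : Fin 3 → F, v ≠ 0 ∧ ∃ c : AlgebraicClosure F, c ≠ 0 ∧
    ∀ i, P.rep i = c * algebraMap F (AlgebraicClosure F) (v i)

/-- The curve defined by `f` is Frobenius non-classical over `F` (with `q = #F`):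
the image of every geometric point of the curve under the `q`-power Frobenius lies on
the tangent line at that point. -/
def FrobeniusNonClassical (f : MvPolynomial (Fin 3) F) (q : ℕ) : Prop :=
  ∀ P : ProjPlane (AlgebraicClosure F), OnCurve f P →
    ∑ i, aeval P.rep (pderiv i f) * P.rep i ^ q = 0


-- auxiliary: number of m-th roots of -1 in an alg closed field
lemma aux_root_count {K : Type*} [Field K] [IsAlgClosed K] (m : ℕ) (hm : 0 < m)
    (hmK : (m : K) ≠ 0) : {t : K | t ^ m = -1}.ncard = m := by
  classical
  have hg : (Polynomial.X ^ m - Polynomial.C (-1) : Polynomial K) ≠ 0 :=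
    Polynomial.X_pow_sub_C_ne_zero hm _
  have hsep : (Polynomial.X ^ m - Polynomial.C (-1) : Polynomial K).Separable :=
    Polynomial.separable_X_pow_sub_C (-1) hmK (by simp)
  have hset : {t : K | t ^ m = -1} =
      ↑((Polynomial.X ^ m - Polynomial.C (-1) : Polynomial K).roots.toFinset) := by
    ext t
    simp only [Set.mem_setOf_eq, Multiset.mem_toFinset, Polynomial.mem_roots hg,
      Polynomial.IsRoot.def, Polynomial.eval_sub, Polynomial.eval_pow, Polynomial.eval_X,
      Polynomial.eval_C, sub_eq_zero, Finset.mem_coe]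
  have hcard := Polynomial.splits_iff_card_roots.mp
    (IsAlgClosed.splits (Polynomial.X ^ m - Polynomial.C (-1) : Polynomial K))
  rw [hset, Set.ncard_coe_finset,
    Multiset.toFinset_card_of_nodup (Polynomial.nodup_roots hsep), hcard,
    Polynomial.natDegree_X_pow_sub_C]

/-- For `m = 1 + q + ⋯ + q^(n-1)` and `n ≥ 2`, the Fermat-type curve
`x^m + y^m + z^m = 0` over `F_{qⁿ}` admits an `F_{qⁿ}`-line meeting it transversely in `m`
distinct geometric points. -/
theorem fermat_type_curve_has_transverse_line
    (p s q n m : ℕ) [Fact p.Prime] (hp : 2 < p) (hs : 1 ≤ s) (hq : q = p ^ s)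
    (hn : 2 ≤ n) (hm : m = ∑ i ∈ Finset.range n, q ^ i)
    (F : Type*) [Field F] [Fintype F] [CharP F p] (hcard : Fintype.card F = q ^ n) :
    ∃ a : Fin 3 → F, a ≠ 0 ∧
      Transverse (X 0 ^ m + X 1 ^ m + X 2 ^ m : MvPolynomial (Fin 3) F) a m := by
  classical
  set K := AlgebraicClosure F with hK
  obtain ⟨k, rfl⟩ : ∃ k, n = k + 1 := ⟨n - 1, by omega⟩
  have hmsum : m = (∑ i ∈ Finset.range k, q ^ (i + 1)) + 1 := by
    rw [hm, Finset.sum_range_succ']; simp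
  have hm1 : 0 < m := by omega
  have hpq : p ∣ q := hq ▸ dvd_pow_self p (by omega)
  have hpsum : p ∣ ∑ i ∈ Finset.range k, q ^ (i + 1) :=
    Finset.dvd_sum fun i _ => hpq.trans (dvd_pow_self q (Nat.succ_ne_zero i))
  have hpm : ¬ p ∣ m := by
    rw [hmsum]
    intro h
    have : p ∣ 1 := (Nat.dvd_add_right hpsum).mp h
    exact Nat.Prime.one_lt (Fact.out) |>.ne' (Nat.dvd_one.mp this)
  have hmK : (m : K) ≠ 0 := by
    rw [Ne, CharP.cast_eq_zero_iff K p m]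
    exact hpm
  -- the line z = 0
  refine ⟨![0, 0, 1], fun h => one_ne_zero (congrFun h 2), ?_⟩
  unfold Transverse
  have hvne : ∀ t : K, (![t, 1, 0] : Fin 3 → K) ≠ 0 :=
    fun t h => one_ne_zero (congrFun h 1)
  set e : K → ProjPlane K := fun t => Projectivization.mk K ![t, 1, 0] (hvne t) with he
  have hOnCurve : ∀ P : ProjPlane K,
      OnCurve (X 0 ^ m + X 1 ^ m + X 2 ^ m : MvPolynomial (Fin 3) F) P ↔
      P.rep 0 ^ m + P.rep 1 ^ m + P.rep 2 ^ m = 0 := by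
    intro P
    simp [OnCurve, map_add, map_pow, aeval_X]
  have hOnLine : ∀ P : ProjPlane K, OnLine ![0, 0, 1] P ↔ P.rep 2 = 0 := by
    intro P
    simp [OnLine, Fin.sum_univ_three]
  have key : {P : ProjPlane K |
      OnCurve (X 0 ^ m + X 1 ^ m + X 2 ^ m : MvPolynomial (Fin 3) F) P ∧
      OnLine ![0, 0, 1] P} = e '' {t : K | t ^ m = -1} := by
    ext P
    simp only [Set.mem_setOf_eq, Set.mem_image, hOnCurve, hOnLine]
    constructor
    · rintro ⟨hcurve, hz⟩
      have hy : P.rep 1 ≠ 0 := by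
        intro hy
        rw [hy, hz, zero_pow hm1.ne', add_zero, add_zero,
          pow_eq_zero_iff hm1.ne'] at hcurve
        apply P.rep_nonzero
        funext i
        fin_cases i <;> simpa
      refine ⟨P.rep 0 / P.rep 1, ?_, ?_⟩
      · have hxm : P.rep 0 ^ m = -(P.rep 1 ^ m) := by
          rw [hz, zero_pow hm1.ne', add_zero] at hcurve
          linear_combination hcurve
        show (P.rep 0 / P.rep 1) ^ m = -1
        rw [div_pow, hxm, neg_div, div_self (pow_ne_zero _ hy)]
      · rw [he]
        have : Projectivization.mk K P.rep P.rep_nonzero = P := Projectivization.mk_rep P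
        rw [← this, Projectivization.mk_eq_mk_iff']
        refine ⟨(P.rep 1)⁻¹, ?_⟩
        funext i
        fin_cases i <;>
          simp [Pi.smul_apply, smul_eq_mul, hz, hy, div_eq_inv_mul]
    · rintro ⟨t, ht, rfl⟩
      obtain ⟨c, hc⟩ := Projectivization.exists_smul_eq_mk_rep K ![t, 1, 0] (hvne t)
      have h0 : (e t).rep 0 = c * t := by rw [he, ← hc]; simp [Units.smul_def]
      have h1 : (e t).rep 1 = c * 1 := by rw [he, ← hc]; simp [Units.smul_def]
      have h2 : (e t).rep 2 = c * 0 := by rw [he, ← hc]; simp [Units.smul_def]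
      refine ⟨?_, by rw [h2, mul_zero]⟩
      rw [h0, h1, h2, mul_one, mul_zero, zero_pow hm1.ne', add_zero, mul_pow, ht]
      ring
  have hinj : Function.Injective e := by
    intro t t' h
    rw [he] at h
    simp only at h
    rw [Projectivization.mk_eq_mk_iff'] at h
    obtain ⟨a, ha⟩ := h
    have h1 := congrFun ha 1
    have h0 := congrFun ha 0
    simp only [Pi.smul_apply, smul_eq_mul, Matrix.cons_val_one, Matrix.head_cons,
      Matrix.cons_val_zero, mul_one] at h1 h0
    rw [h1, one_mul] at h0
    exact h0.symm
  rw [key, Set.ncard_image_of_injective _ hinj]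
  exact aux_root_count m hm1 hmK


end
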